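/- Let V : [0,1]ⁿ → ℝ be continuous, let θ > 0, and set S_θ := { x ∈ (0,1)ⁿ : V(x) ≥ inf_{[0,1]ⁿ} V + θ }. Then lim_{T → 0⁺} [ ∫_{S_θ} exp(−V(x)/T) dx ] / [ ∫_{(0,1)ⁿ} exp(−V(x)/T) dx ] = 0. -/

import Mathlib

open MeasureTheory Real Set Filter Topology

/-- as `T → 0⁺` the Gibbs distribution concentrates away from
`S_θ = {x : V(x) ≥ inf V + θ}`: the Gibbs probability of `S_θ` tends to `0`. -/
theorem gibbs_concentration
    (n : ℕ) (V : (Fin n → ℝ) → ℝ)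
    (hV : ContinuousOn V (Set.pi Set.univ fun _ : Fin n => Set.Icc (0 : ℝ) 1))
    (θ : ℝ) (hθ : 0 < θ) :
    let cube : Set (Fin n → ℝ) := Set.pi Set.univ fun _ : Fin n => Set.Ioo (0 : ℝ) 1
    let closedCube : Set (Fin n → ℝ) := Set.pi Set.univ fun _ : Fin n => Set.Icc (0 : ℝ) 1
    let S : Set (Fin n → ℝ) := {x ∈ cube | sInf (V '' closedCube) + θ ≤ V x}
    Tendsto (fun T : ℝ =>
        (∫ x in S, Real.exp (-(V x) / T)) / ∫ x in cube, Real.exp (-(V x) / T))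
      (𝓝[>] 0) (𝓝 0) := by
  intro cube closedCube S
  have hcube_open : IsOpen cube := isOpen_set_pi finite_univ (fun i _ => isOpen_Ioo)
  have hsub : cube ⊆ closedCube := Set.pi_mono fun i _ => Ioo_subset_Icc_self
  have hcc : IsCompact closedCube := isCompact_univ_pi fun _ => isCompact_Icc
  have hcl_ne : closedCube.Nonempty :=
    ⟨fun _ => 0, fun i _ => ⟨le_refl 0, zero_le_one⟩⟩
  set m := sInf (V '' closedCube) with hm
  obtain ⟨x₀, hx₀, hmx₀⟩ := hcc.exists_sInf_image_eq hcl_ne hV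
  have hbdd : BddBelow (V '' closedCube) := (hcc.image_of_continuousOn hV).bddBelow
  have hlb : ∀ x ∈ closedCube, m ≤ V x := fun x hx => csInf_le hbdd ⟨x, hx, rfl⟩
  -- the open cube is dense in the closed cube
  have hclosure : closedCube ⊆ closure cube := by
    rw [show cube = Set.pi Set.univ (fun _ : Fin n => Set.Ioo (0:ℝ) 1) from rfl,
      closure_pi_set]
    exact Set.pi_mono fun i _ => by rw [closure_Ioo (zero_ne_one)]
  -- find a point of the open cube where V < m + θ/2
  have hx₀V : V x₀ < m + θ / 2 := by rw [← hmx₀]; linarith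
  have hnb : (𝓝[cube] x₀).NeBot := mem_closure_iff_nhdsWithin_neBot.1 (hclosure hx₀)
  have hVmem : V ⁻¹' (Set.Iio (m + θ / 2)) ∈ 𝓝[cube] x₀ :=
    nhdsWithin_mono x₀ hsub ((hV x₀ hx₀) (Iio_mem_nhds hx₀V))
  obtain ⟨y, hyV, hy⟩ :=
    Filter.nonempty_of_mem (Filter.inter_mem hVmem self_mem_nhdsWithin)
  -- the open set U where V < m + θ/2
  set U : Set (Fin n → ℝ) := cube ∩ V ⁻¹' (Set.Iio (m + θ / 2)) with hU
  have hU_open : IsOpen U :=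
    (hV.mono hsub).isOpen_inter_preimage hcube_open isOpen_Iio
  have hU_sub : U ⊆ cube := Set.inter_subset_left
  have hU_pos : 0 < volume U := hU_open.measure_pos volume ⟨y, hy, hyV⟩
  have hU_fin : volume U < ⊤ :=
    lt_of_le_of_lt (measure_mono (hU_sub.trans hsub)) hcc.measure_lt_top
  have hUr_pos : 0 < (volume U).toReal := ENNReal.toReal_pos hU_pos.ne' hU_fin.ne
  -- S is measurable
  have hS_sub : S ⊆ cube := fun x hx => hx.1
  have hS_meas : MeasurableSet S := by
    have : S = cube \ (cube ∩ V ⁻¹' (Set.Iio (m + θ))) := by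
      ext x
      simp only [S, Set.mem_setOf_eq, Set.mem_diff, Set.mem_inter_iff,
        Set.mem_preimage, Set.mem_Iio, not_and, not_lt]
      exact ⟨fun ⟨h1, h2⟩ => ⟨h1, fun _ => h2⟩, fun ⟨h1, h2⟩ => ⟨h1, h2 h1⟩⟩
    rw [this]
    exact hcube_open.measurableSet.diff
      ((hV.mono hsub).isOpen_inter_preimage hcube_open isOpen_Iio).measurableSet
  have hS_fin : volume S < ⊤ :=
    lt_of_le_of_lt (measure_mono (hS_sub.trans hsub)) hcc.measure_lt_top
  -- integrability for each T
  have hInt : ∀ T : ℝ, IntegrableOn (fun x => Real.exp (-(V x) / T)) closedCube volume := by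
    intro T
    exact (Real.continuous_exp.comp_continuousOn (hV.neg.div_const T)).integrableOn_compact hcc
  -- the dominating function
  set C : ℝ := (volume S).toReal / (volume U).toReal with hC
  have hg : Tendsto (fun T : ℝ => C * Real.exp (-(θ / 2) / T)) (𝓝[>] 0) (𝓝 0) := by
    have h1 : Tendsto (fun T : ℝ => θ / 2 * T⁻¹) (𝓝[>] (0:ℝ)) atTop :=
      (tendsto_inv_nhdsGT_zero).const_mul_atTop (by positivity)
    have h2 : Tendsto (fun T : ℝ => -(θ / 2) / T) (𝓝[>] (0:ℝ)) atBot := by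
      have := tendsto_neg_atTop_atBot.comp h1
      refine this.congr fun T => ?_
      simp [Function.comp, div_eq_mul_inv]
    have h3 : Tendsto (fun T : ℝ => Real.exp (-(θ / 2) / T)) (𝓝[>] (0:ℝ)) (𝓝 0) :=
      Real.tendsto_exp_atBot.comp h2
    simpa using h3.const_mul C
  -- squeeze
  refine tendsto_of_tendsto_of_tendsto_of_le_of_le' tendsto_const_nhds hg ?_ ?_
  · filter_upwards [self_mem_nhdsWithin] with T (hT : 0 < T)
    have hnum : 0 ≤ ∫ x in S, Real.exp (-(V x) / T) :=
      setIntegral_nonneg hS_meas fun x _ => (Real.exp_pos _).le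
    have hden : 0 ≤ ∫ x in cube, Real.exp (-(V x) / T) :=
      setIntegral_nonneg hcube_open.measurableSet fun x _ => (Real.exp_pos _).le
    exact div_nonneg hnum hden
  · filter_upwards [self_mem_nhdsWithin] with T (hT : 0 < T)
    have hIntS : IntegrableOn (fun x => Real.exp (-(V x) / T)) S volume :=
      (hInt T).mono_set (hS_sub.trans hsub)
    have hIntU : IntegrableOn (fun x => Real.exp (-(V x) / T)) U volume :=
      (hInt T).mono_set (hU_sub.trans hsub)
    have hIntCube : IntegrableOn (fun x => Real.exp (-(V x) / T)) cube volume :=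
      (hInt T).mono_set hsub
    -- numerator bound
    have hnum_le : (∫ x in S, Real.exp (-(V x) / T))
        ≤ (volume S).toReal * Real.exp (-(m + θ) / T) := by
      have h1 : (∫ x in S, Real.exp (-(V x) / T))
          ≤ ∫ _x in S, Real.exp (-(m + θ) / T) := by
        refine setIntegral_mono_on hIntS (integrableOn_const hS_fin.ne) hS_meas ?_
        intro x hx
        have hx2 : m + θ ≤ V x := hx.2
        have : -(V x) / T ≤ -(m + θ) / T := by
          gcongr
        exact Real.exp_le_exp.2 this
      rw [setIntegral_const, smul_eq_mul] at h1
      exact h1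
    -- denominator bound
    have hden_ge : (volume U).toReal * Real.exp (-(m + θ / 2) / T)
        ≤ ∫ x in cube, Real.exp (-(V x) / T) := by
      have h1 : (∫ _x in U, Real.exp (-(m + θ / 2) / T))
          ≤ ∫ x in U, Real.exp (-(V x) / T) := by
        refine setIntegral_mono_on (integrableOn_const
          (lt_of_le_of_lt (measure_mono (hU_sub.trans hsub)) hcc.measure_lt_top).ne)
          hIntU hU_open.measurableSet ?_
        intro x hx
        have hx2 : V x < m + θ / 2 := hx.2
        refine Real.exp_le_exp.2 ?_
        gcongr
      have h2 : (∫ x in U, Real.exp (-(V x) / T))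
          ≤ ∫ x in cube, Real.exp (-(V x) / T) := by
        refine setIntegral_mono_set hIntCube ?_ (Filter.Eventually.of_forall hU_sub)
        exact Filter.Eventually.of_forall fun x => (Real.exp_pos _).le
      rw [setIntegral_const, smul_eq_mul] at h1
      exact h1.trans h2
    have hBpos : 0 < (volume U).toReal * Real.exp (-(m + θ / 2) / T) := by positivity
    have hAnn : 0 ≤ (volume S).toReal * Real.exp (-(m + θ) / T) := by positivity
    have hnum0 : 0 ≤ ∫ x in S, Real.exp (-(V x) / T) :=
      setIntegral_nonneg hS_meas fun x _ => (Real.exp_pos _).le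
    calc (∫ x in S, Real.exp (-(V x) / T)) / ∫ x in cube, Real.exp (-(V x) / T)
        ≤ ((volume S).toReal * Real.exp (-(m + θ) / T)) /
          ((volume U).toReal * Real.exp (-(m + θ / 2) / T)) :=
          div_le_div₀ hAnn hnum_le hBpos hden_ge
      _ = C * Real.exp (-(θ / 2) / T) := by
          rw [mul_div_mul_comm, ← Real.exp_sub]
          congr 1
          ring
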